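/- Let ρ ∈ (0,1], let M be a finite set, and let (S_i)_{i ∈ I} be a nonempty family of subsets of M with |S_i| ≥ ρ·|M| for all i ∈ I. Set k(ρ) := ⌈ρ⁻¹⌉ + 1 and t(ρ) := ρ / Δ_{k(ρ)−1}, where Δ_n := n(n+1)/2 is the n-th triangle number. If |I| ≥ 2(k(ρ)−1), then there exists i ∈ I such that for at least |I| / (2(k(ρ)−1)) many indices j ∈ I \ {i}, one has |S_i ∩ S_j| ≥ t(ρ)·|M|. -/

import Mathlib

open Finset

lemma card_as_sum {M : Type} [Fintype M] [DecidableEq M] (s : Finset M) :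
    s.card = ∑ x : M, if x ∈ s then 1 else 0 := by
  rw [Finset.sum_ite_mem, Finset.univ_inter, Finset.sum_const, smul_eq_mul, mul_one]

lemma stepA (ρ : ℝ) (hρ0 : 0 < ρ) (M : Type) [Fintype M] [DecidableEq M]
    (I : Type) [DecidableEq I] (S : I → Finset M)
    (hS : ∀ i : I, ρ * (Fintype.card M : ℝ) ≤ ((S i).card : ℝ))
    (T : Finset I) (hT : T.card = ⌈ρ⁻¹⌉₊ + 1) :
    ∃ a ∈ T, ∃ b ∈ T, a ≠ b ∧
      ρ / ((⌈ρ⁻¹⌉₊ : ℝ) * ((⌈ρ⁻¹⌉₊ : ℝ) + 1) / 2) * (Fintype.card M : ℝ)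
        ≤ ((S a ∩ S b).card : ℝ) := by
  classical
  set q : ℕ := ⌈ρ⁻¹⌉₊ with hqdef
  set m : ℕ := Fintype.card M with hmdef
  have hq0 : 0 < q := Nat.ceil_pos.mpr (by positivity)
  have hq0' : (0 : ℝ) < q := by exact_mod_cast hq0
  have hm0 : (0 : ℝ) ≤ m := Nat.cast_nonneg m
  have hqρ : 1 ≤ (q : ℝ) * ρ := by
    have h1 := Nat.le_ceil ρ⁻¹
    have : ρ⁻¹ * ρ ≤ (q : ℝ) * ρ := mul_le_mul_of_nonneg_right h1 hρ0.le
    rwa [inv_mul_cancel₀ hρ0.ne'] at this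
  set t0 : ℝ := ρ / ((q : ℝ) * ((q : ℝ) + 1) / 2) * (m : ℝ) with ht0
  by_contra hcon
  push_neg at hcon
  set d : M → ℕ := fun x => (T.filter (fun i => x ∈ S i)).card with hd
  have key1 : ∑ i ∈ T, (S i).card = ∑ x : M, d x := by
    simp only [hd, Finset.card_filter]
    rw [Finset.sum_comm]
    exact Finset.sum_congr rfl fun i _ => card_as_sum (S i)
  have key2 : ∑ i ∈ T, ∑ j ∈ T, (S i ∩ S j).card = ∑ x : M, d x * d x := by
    simp only [hd, Finset.card_filter]
    have h1 : ∀ i j : I, (S i ∩ S j).card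
        = ∑ x : M, (if x ∈ S i then 1 else 0) * (if x ∈ S j then 1 else 0) := by
      intro i j
      rw [card_as_sum]
      refine Finset.sum_congr rfl fun x _ => ?_
      by_cases h1 : x ∈ S i <;> by_cases h2 : x ∈ S j <;>
        simp [h1, h2, Finset.mem_inter]
    calc ∑ i ∈ T, ∑ j ∈ T, (S i ∩ S j).card
        = ∑ i ∈ T, ∑ j ∈ T, ∑ x : M,
            (if x ∈ S i then 1 else 0) * (if x ∈ S j then 1 else 0) := by
          refine Finset.sum_congr rfl fun i _ => Finset.sum_congr rfl fun j _ => h1 i j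
      _ = ∑ i ∈ T, ∑ x : M, ∑ j ∈ T,
            (if x ∈ S i then 1 else 0) * (if x ∈ S j then 1 else 0) :=
          Finset.sum_congr rfl fun i _ => Finset.sum_comm
      _ = ∑ x : M, ∑ i ∈ T, ∑ j ∈ T,
            (if x ∈ S i then 1 else 0) * (if x ∈ S j then 1 else 0) :=
          Finset.sum_comm
      _ = ∑ x : M, (∑ i ∈ T, if x ∈ S i then 1 else 0) * (∑ j ∈ T, if x ∈ S j then 1 else 0) := by
          refine Finset.sum_congr rfl fun x _ => (Finset.sum_mul_sum T T (fun i => if x ∈ S i then (1:ℕ) else 0) (fun j => if x ∈ S j then (1:ℕ) else 0)).symm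
  have split : ∀ i ∈ T, ∑ j ∈ T, (S i ∩ S j).card
      = (S i).card + ∑ j ∈ T.erase i, (S i ∩ S j).card := by
    intro i hi
    rw [← Finset.add_sum_erase T _ hi, Finset.inter_self]
  set Soff : ℕ := ∑ i ∈ T, ∑ j ∈ T.erase i, (S i ∩ S j).card with hSoff
  have key3 : ∑ x : M, d x + Soff = ∑ x : M, d x * d x := by
    rw [← key2, ← key1, ← Finset.sum_add_distrib]
    exact Finset.sum_congr rfl fun i hi => (split i hi).symm
  have key3' : (∑ x : M, (d x : ℝ)) + (Soff : ℝ) = ∑ x : M, (d x : ℝ) * (d x : ℝ) := by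
    exact_mod_cast key3
  have hsum_d : ((q : ℝ) + 1) * (ρ * m) ≤ ∑ x : M, (d x : ℝ) := by
    have he : ∑ x : M, (d x : ℝ) = ∑ i ∈ T, ((S i).card : ℝ) := by
      exact_mod_cast congrArg (Nat.cast : ℕ → ℝ) key1.symm
    rw [he]
    calc ((q : ℝ) + 1) * (ρ * m) = ∑ _i ∈ T, ρ * (m : ℝ) := by
          rw [Finset.sum_const, hT]; push_cast; ring
      _ ≤ ∑ i ∈ T, ((S i).card : ℝ) := Finset.sum_le_sum fun i _ => hS i
  have hpt : ∀ x : M, (d x : ℝ) + (2 * (d x : ℝ) - 2) ≤ (d x : ℝ) * (d x : ℝ) := by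
    intro x
    have : d x = 0 ∨ d x = 1 ∨ 2 ≤ d x := by omega
    rcases this with h | h | h
    · simp [h]
    · simp [h]
    · have h' : (2 : ℝ) ≤ (d x : ℝ) := by exact_mod_cast h
      nlinarith
  have h1 : ∑ x : M, ((d x : ℝ) + (2 * (d x : ℝ) - 2)) ≤ ∑ x : M, (d x : ℝ) * (d x : ℝ) :=
    Finset.sum_le_sum fun x _ => hpt x
  have hsplit : ∑ x : M, ((d x : ℝ) + (2 * (d x : ℝ) - 2))
      = (∑ x : M, (d x : ℝ)) + (2 * (∑ x : M, (d x : ℝ)) - 2 * m) := by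
    rw [Finset.sum_add_distrib, Finset.sum_sub_distrib, ← Finset.mul_sum,
      Finset.sum_const, Finset.card_univ, ← hmdef]
    push_cast; ring
  have hSoff_lb : 2 * ρ * (m : ℝ) ≤ (Soff : ℝ) := by
    nlinarith [mul_nonneg (sub_nonneg.mpr hqρ) hm0]
  -- upper bound from hcon
  have hT_ne : T.Nonempty := Finset.card_pos.mp (by omega)
  have hSoff_ub : (Soff : ℝ) < 2 * ρ * (m : ℝ) := by
    have hcast : (Soff : ℝ) = ∑ i ∈ T, ∑ j ∈ T.erase i, ((S i ∩ S j).card : ℝ) := by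
      push_cast [hSoff]; rfl
    have hub : (Soff : ℝ) < ∑ _i ∈ T, (q : ℝ) * t0 := by
      rw [hcast]
      refine Finset.sum_lt_sum_of_nonempty hT_ne fun i hi => ?_
      have herase_card : (T.erase i).card = q := by
        rw [Finset.card_erase_of_mem hi, hT]
        omega
      have herase_ne : (T.erase i).Nonempty := Finset.card_pos.mp (by omega)
      calc ∑ j ∈ T.erase i, ((S i ∩ S j).card : ℝ)
          < ∑ _j ∈ T.erase i, t0 := by
            refine Finset.sum_lt_sum_of_nonempty herase_ne fun j hj => ?_
            exact hcon i hi j (Finset.mem_of_mem_erase hj)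
              (Ne.symm (Finset.ne_of_mem_erase hj))
        _ = (q : ℝ) * t0 := by rw [Finset.sum_const, herase_card]; simp
    have heq : ∑ _i ∈ T, (q : ℝ) * t0 = 2 * ρ * (m : ℝ) := by
      rw [Finset.sum_const, hT, ht0]
      push_cast
      field_simp
      have hq1 : (1 + (q : ℝ))⁻¹ * (1 + q) = 1 := inv_mul_cancel₀ (by positivity)
      linear_combination (ρ * (m : ℝ) * 2) * hq1
    linarith
  linarith

/-- Lemma on intersections of non-negligible subsets, part (3).
Here `k(ρ) = ⌈ρ⁻¹⌉ + 1` (so `k(ρ) - 1 = ⌈ρ⁻¹⌉`) and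
`t(ρ) = ρ / Δ_{k(ρ)-1} = ρ / (⌈ρ⁻¹⌉(⌈ρ⁻¹⌉+1)/2)`. -/
theorem stmt_11 (ρ : ℝ) (hρ0 : 0 < ρ) (hρ1 : ρ ≤ 1)
    (M : Type) [Fintype M] [DecidableEq M]
    (I : Type) [Fintype I] [Nonempty I] (S : I → Finset M)
    (hS : ∀ i : I, ρ * (Fintype.card M : ℝ) ≤ ((S i).card : ℝ))
    (hI : 2 * ⌈ρ⁻¹⌉₊ ≤ Fintype.card I) :
    ∃ i : I, (Fintype.card I : ℝ) / (2 * (⌈ρ⁻¹⌉₊ : ℝ)) ≤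
      (Nat.card {j : I // j ≠ i ∧
        ρ / ((⌈ρ⁻¹⌉₊ : ℝ) * ((⌈ρ⁻¹⌉₊ : ℝ) + 1) / 2) * (Fintype.card M : ℝ)
          ≤ ((S i ∩ S j).card : ℝ)} : ℝ) := by
  classical
  set q : ℕ := ⌈ρ⁻¹⌉₊ with hqdef
  set n : ℕ := Fintype.card I with hndef
  set m : ℕ := Fintype.card M with hmdef
  set t0 : ℝ := ρ / ((q : ℝ) * ((q : ℝ) + 1) / 2) * (m : ℝ) with ht0
  have hq0 : 0 < q := Nat.ceil_pos.mpr (by positivity)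
  have hq0' : (0 : ℝ) < q := by exact_mod_cast hq0
  set Indep : Finset I → Prop :=
    fun A => ∀ a ∈ A, ∀ b ∈ A, a ≠ b → ((S a ∩ S b).card : ℝ) < t0 with hIndep
  set 𝒜 : Finset (Finset I) := Finset.univ.filter Indep with h𝒜
  have hEmp : (∅ : Finset I) ∈ 𝒜 := by
    simp [h𝒜, hIndep]
  obtain ⟨A, hA𝒜, hAmax⟩ := Finset.exists_max_image 𝒜 Finset.card ⟨∅, hEmp⟩
  have hAindep : Indep A := (Finset.mem_filter.mp hA𝒜).2
  have hAq : A.card ≤ q := by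
    by_contra h
    push_neg at h
    obtain ⟨T, hTA, hTcard⟩ := Finset.exists_subset_card_eq h
    obtain ⟨a, ha, b, hb, hab, hle⟩ := stepA ρ hρ0 M I S hS T hTcard
    exact absurd hle (not_le.mpr (hAindep a (hTA ha) b (hTA hb) hab))
  have hmax_ins : ∀ i ∉ A, ∃ a ∈ A, t0 ≤ ((S a ∩ S i).card : ℝ) := by
    intro i hiA
    by_contra h
    push_neg at h
    have hins : Indep (insert i A) := by
      intro a ha b hb hab
      rcases Finset.mem_insert.mp ha with rfl | ha'
      · rcases Finset.mem_insert.mp hb with rfl | hb'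
        · exact absurd rfl hab
        · rw [Finset.inter_comm]; exact h b hb'
      · rcases Finset.mem_insert.mp hb with rfl | hb'
        · exact h a ha'
        · exact hAindep a ha' b hb' hab
    have hmem : insert i A ∈ 𝒜 := Finset.mem_filter.mpr ⟨Finset.mem_univ _, hins⟩
    have hc := hAmax _ hmem
    rw [Finset.card_insert_of_notMem hiA] at hc
    omega
  have hA_ne : A.Nonempty := by
    rcases Finset.eq_empty_or_nonempty A with rfl | h
    · obtain ⟨i⟩ := (inferInstance : Nonempty I)
      obtain ⟨a, ha, -⟩ := hmax_ins i (Finset.notMem_empty i)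
      exact absurd ha (Finset.notMem_empty a)
    · exact h
  set N : I → ℕ := fun a =>
    (Finset.univ.filter (fun j => j ≠ a ∧ t0 ≤ ((S a ∩ S j).card : ℝ))).card with hN
  have hcount : (Finset.univ \ A).card ≤ ∑ a ∈ A, N a := by
    have hsub : Finset.univ \ A ⊆ A.biUnion (fun a =>
        Finset.univ.filter (fun j => j ≠ a ∧ t0 ≤ ((S a ∩ S j).card : ℝ))) := by
      intro i hi
      rw [Finset.mem_sdiff] at hi
      obtain ⟨a, ha, hta⟩ := hmax_ins i hi.2
      refine Finset.mem_biUnion.mpr ⟨a, ha, Finset.mem_filter.mpr ⟨Finset.mem_univ _, ?_, hta⟩⟩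
      rintro rfl
      exact hi.2 ha
    calc (Finset.univ \ A).card ≤ _ := Finset.card_le_card hsub
      _ ≤ ∑ a ∈ A, N a := Finset.card_biUnion_le
  have hAn : A.card ≤ n := by
    rw [hndef, ← Finset.card_univ]
    exact Finset.card_le_card (Finset.subset_univ A)
  have hsdiff : (Finset.univ \ A).card = n - A.card := by
    rw [Finset.card_sdiff_of_subset (Finset.subset_univ A), Finset.card_univ]
  have hsum : (n : ℝ) - A.card ≤ ∑ a ∈ A, (N a : ℝ) := by
    have h1 : ((Finset.univ \ A).card : ℝ) = (n : ℝ) - A.card := by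
      rw [hsdiff]
      push_cast [hAn]
      ring
    have h2 : ((Finset.univ \ A).card : ℝ) ≤ ∑ a ∈ A, (N a : ℝ) := by
      exact_mod_cast hcount
    linarith
  have havg : ∑ a ∈ A, ((n : ℝ) / (2 * q)) ≤ ∑ a ∈ A, (N a : ℝ) := by
    have hAcq : (A.card : ℝ) ≤ q := by exact_mod_cast hAq
    have h2qn : 2 * (q : ℝ) ≤ n := by exact_mod_cast hI
    have hAc0 : (0 : ℝ) ≤ A.card := Nat.cast_nonneg _
    have : (A.card : ℝ) * ((n : ℝ) / (2 * q)) ≤ (n : ℝ) - A.card := by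
      have h2q : (0 : ℝ) < 2 * q := by positivity
      rw [mul_div_assoc', div_le_iff₀ h2q]
      nlinarith [mul_le_mul_of_nonneg_right hAcq (Nat.cast_nonneg n : (0:ℝ) ≤ n),
        mul_le_mul_of_nonneg_left h2qn hAc0]
    calc ∑ a ∈ A, ((n : ℝ) / (2 * q)) = (A.card : ℝ) * ((n : ℝ) / (2 * q)) := by
          rw [Finset.sum_const]; push_cast; ring
      _ ≤ (n : ℝ) - A.card := this
      _ ≤ ∑ a ∈ A, (N a : ℝ) := hsum
  obtain ⟨a, haA, hle⟩ := Finset.exists_le_of_sum_le hA_ne havg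
  refine ⟨a, ?_⟩
  have hcard : (Nat.card {j : I // j ≠ a ∧ t0 ≤ ((S a ∩ S j).card : ℝ)} : ℝ) = (N a : ℝ) := by
    rw [Nat.card_eq_fintype_card, Fintype.card_subtype]
  rw [hcard]
  exact hle
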